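/- Let C > 0 and let P, Q ∈ ℝ^{d×d} be symmetric positive definite matrices whose smallest eigenvalues satisfy λ_min(P) ≥ C and λ_min(Q) ≥ C. Then ‖P⁻³ − Q⁻³‖ ≤ (3√d / C⁴) ‖P − Q‖, where ‖·‖ is the Frobenius norm and P⁻³ = (P⁻¹)³. -/

import Mathlib

open Matrix

/-- Frobenius norm `‖X‖ = (trace(Xᵀ X))^{1/2}`. -/
noncomputable def frobNorm {d : ℕ} (X : Matrix (Fin d) (Fin d) ℝ) : ℝ :=
  Real.sqrt (Matrix.trace (Xᵀ * X))

namespace InvCubeAux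

variable {d : ℕ}

/-- Squared Frobenius norm. -/
noncomputable def S (X : Matrix (Fin d) (Fin d) ℝ) : ℝ := Matrix.trace (Xᵀ * X)

lemma S_eq (X : Matrix (Fin d) (Fin d) ℝ) : S X = ∑ j, ∑ i, (X i j) ^ 2 := by
  simp [S, Matrix.trace, Matrix.diag, Matrix.mul_apply, sq]

lemma S_nonneg (X : Matrix (Fin d) (Fin d) ℝ) : 0 ≤ S X := by
  rw [S_eq]; positivity

lemma S_transpose (X : Matrix (Fin d) (Fin d) ℝ) : S Xᵀ = S X := by
  rw [S, S, Matrix.transpose_transpose, Matrix.trace_mul_comm]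

lemma frobNorm_eq (X : Matrix (Fin d) (Fin d) ℝ) : frobNorm X = Real.sqrt (S X) := rfl

lemma dot_self_eq (x : Fin d → ℝ) : x ⬝ᵥ x = ∑ i, x i ^ 2 := by
  simp [dotProduct, sq]

/-- `A` maps vectors with squared-norm dilation at most `k`. -/
def OpSqBnd (A : Matrix (Fin d) (Fin d) ℝ) (k : ℝ) : Prop :=
  ∀ v : Fin d → ℝ, (A *ᵥ v) ⬝ᵥ (A *ᵥ v) ≤ k * (v ⬝ᵥ v)

lemma OpSqBnd.mul_left {A : Matrix (Fin d) (Fin d) ℝ} {k : ℝ} (hA : OpSqBnd A k)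
    (hk : 0 ≤ k) (B : Matrix (Fin d) (Fin d) ℝ) : S (A * B) ≤ k * S B := by
  have hcol : ∀ j, (fun i => (A * B) i j) = A *ᵥ (fun i => B i j) := by
    intro j; funext i; simp [Matrix.mul_apply, Matrix.mulVec, dotProduct]
  rw [S_eq, S_eq, Finset.mul_sum]
  refine Finset.sum_le_sum fun j _ => ?_
  have h := hA (fun i => B i j)
  rw [dot_self_eq, dot_self_eq] at h
  calc ∑ i, ((A * B) i j) ^ 2 = ∑ i, ((A *ᵥ fun i => B i j) i) ^ 2 := by
        rw [← hcol j]
    _ ≤ k * ∑ i, (B i j) ^ 2 := h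

lemma OpSqBnd.mul_right {A : Matrix (Fin d) (Fin d) ℝ} {k : ℝ} (hA : OpSqBnd A k)
    (hk : 0 ≤ k) (hAs : Aᵀ = A) (B : Matrix (Fin d) (Fin d) ℝ) : S (B * A) ≤ k * S B := by
  have h1 : S (B * A) = S (A * Bᵀ) := by
    rw [← S_transpose (B * A), Matrix.transpose_mul, hAs]
  rw [h1, ← S_transpose B]
  exact hA.mul_left hk Bᵀ

lemma OpSqBnd.pow {A : Matrix (Fin d) (Fin d) ℝ} {k : ℝ} (hA : OpSqBnd A k)
    (hk : 0 ≤ k) (m : ℕ) : OpSqBnd (A ^ m) (k ^ m) := by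
  induction m with
  | zero => intro v; simp [Matrix.one_mulVec]
  | succ m ih =>
      intro v
      have h1 : A ^ (m + 1) *ᵥ v = A *ᵥ (A ^ m *ᵥ v) := by
        rw [pow_succ', Matrix.mulVec_mulVec]
      rw [h1]
      calc (A *ᵥ (A ^ m *ᵥ v)) ⬝ᵥ (A *ᵥ (A ^ m *ᵥ v)) ≤ k * ((A ^ m *ᵥ v) ⬝ᵥ (A ^ m *ᵥ v)) :=
            hA _
        _ ≤ k * (k ^ m * (v ⬝ᵥ v)) := by
            have := ih v
            nlinarith [this]
        _ = k ^ (m + 1) * (v ⬝ᵥ v) := by ring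

lemma posSemidef_sub_smul {C : ℝ} {P : Matrix (Fin d) (Fin d) ℝ} (hP : P.PosDef)
    (hPev : ∀ i, C ≤ hP.1.eigenvalues i) : (P - C • 1).PosSemidef := by
  have hU : (hP.1.eigenvectorUnitary : Matrix (Fin d) (Fin d) ℝ)
      * star (hP.1.eigenvectorUnitary : Matrix (Fin d) (Fin d) ℝ) = 1 :=
    (Matrix.mem_unitaryGroup_iff).mp (hP.1.eigenvectorUnitary).2
  set U : Matrix (Fin d) (Fin d) ℝ := ↑(hP.1.eigenvectorUnitary) with hUdef
  have hdiag : Matrix.diagonal (RCLike.ofReal ∘ hP.1.eigenvalues) - (C • 1 : Matrix (Fin d) (Fin d) ℝ)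
      = Matrix.diagonal (fun i => hP.1.eigenvalues i - C) := by
    rw [Matrix.smul_one_eq_diagonal, ← Matrix.diagonal_sub]
    congr 1
  have key : P - C • 1 = U * Matrix.diagonal (fun i => hP.1.eigenvalues i - C) * star U := by
    have hCU : U * (C • (1 : Matrix (Fin d) (Fin d) ℝ)) * star U = C • 1 := by
      rw [mul_smul_comm, mul_one, smul_mul_assoc, hU]
    calc P - C • 1
        = U * Matrix.diagonal (RCLike.ofReal ∘ hP.1.eigenvalues) * star U
          - U * (C • (1 : Matrix (Fin d) (Fin d) ℝ)) * star U := by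
          rw [hCU]
          conv_lhs => rw [hP.1.spectral_theorem, Unitary.conjStarAlgAut_apply]
      _ = U * (Matrix.diagonal (RCLike.ofReal ∘ hP.1.eigenvalues) - C • 1) * star U := by
          rw [Matrix.mul_sub, Matrix.sub_mul]
      _ = U * Matrix.diagonal (fun i => hP.1.eigenvalues i - C) * star U := by rw [hdiag]
  rw [key]
  have hd : Matrix.PosSemidef (Matrix.diagonal (fun i => hP.1.eigenvalues i - C)) :=
    Matrix.PosSemidef.diagonal (fun i => sub_nonneg.mpr (hPev i))
  simpa [Matrix.star_eq_conjTranspose] using hd.mul_mul_conjTranspose_same U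

lemma quad_lower {C : ℝ} {P : Matrix (Fin d) (Fin d) ℝ} (hP : P.PosDef)
    (hPev : ∀ i, C ≤ hP.1.eigenvalues i) (y : Fin d → ℝ) :
    C * (y ⬝ᵥ y) ≤ y ⬝ᵥ (P *ᵥ y) := by
  have h := (posSemidef_sub_smul hP hPev).dotProduct_mulVec_nonneg y
  have h2 : (P - C • (1 : Matrix (Fin d) (Fin d) ℝ)) *ᵥ y = P *ᵥ y - C • y := by
    rw [Matrix.sub_mulVec, Matrix.smul_mulVec, Matrix.one_mulVec]
  rw [h2, star_trivial, dotProduct_sub, dotProduct_smul, smul_eq_mul] at h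
  linarith

lemma inv_opSqBnd {C : ℝ} (hC : 0 < C) {P : Matrix (Fin d) (Fin d) ℝ} (hP : P.PosDef)
    (hPev : ∀ i, C ≤ hP.1.eigenvalues i) : OpSqBnd P⁻¹ ((C ^ 2)⁻¹) := by
  intro v
  set y := P⁻¹ *ᵥ v with hy
  have hdet : IsUnit P.det := isUnit_iff_ne_zero.mpr hP.det_pos.ne'
  have hPy : P *ᵥ y = v := by
    rw [hy, Matrix.mulVec_mulVec, Matrix.mul_nonsing_inv _ hdet, Matrix.one_mulVec]
  have h1 : C * (y ⬝ᵥ y) ≤ y ⬝ᵥ v := by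
    have := quad_lower hP hPev y
    rwa [hPy] at this
  have hCS : (y ⬝ᵥ v) ^ 2 ≤ (y ⬝ᵥ y) * (v ⬝ᵥ v) := by
    have := Finset.sum_mul_sq_le_sq_mul_sq Finset.univ y v
    rw [dot_self_eq, dot_self_eq]
    simpa [dotProduct] using this
  have ha : 0 ≤ y ⬝ᵥ y := by rw [dot_self_eq]; positivity
  have hb : 0 ≤ v ⬝ᵥ v := by rw [dot_self_eq]; positivity
  rcases ha.eq_or_lt with h0 | hpos
  · rw [← h0]; positivity
  · have ht : 0 ≤ y ⬝ᵥ v := le_trans (by positivity) h1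
    have hsq : (C * (y ⬝ᵥ y)) ^ 2 ≤ (y ⬝ᵥ y) * (v ⬝ᵥ v) :=
      le_trans (pow_le_pow_left₀ (by positivity) h1 2) hCS
    have hC2 : C ^ 2 * (y ⬝ᵥ y) ≤ v ⬝ᵥ v := by
      have := hsq
      nlinarith [hpos]
    rw [inv_mul_eq_div, le_div_iff₀ (by positivity : (0:ℝ) < C ^ 2)]
    nlinarith [hC2]

lemma term_bound {C : ℝ} (hC : 0 < C) {D E R : Matrix (Fin d) (Fin d) ℝ}
    (hD : OpSqBnd D ((C ^ 2)⁻¹)) (hE : OpSqBnd E ((C ^ 2)⁻¹)) (hEs : Eᵀ = E)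
    (a b : ℕ) (hab : a + b = 4) :
    frobNorm (D ^ a * R * E ^ b) ≤ (C ^ 4)⁻¹ * frobNorm R := by
  have hk : (0:ℝ) ≤ (C ^ 2)⁻¹ := by positivity
  have hEbs : (E ^ b)ᵀ = E ^ b := by rw [Matrix.transpose_pow, hEs]
  have h1 : S (R * E ^ b) ≤ ((C ^ 2)⁻¹) ^ b * S R :=
    ((hE.pow hk b).mul_right (by positivity) hEbs R)
  have h2 : S (D ^ a * (R * E ^ b)) ≤ ((C ^ 2)⁻¹) ^ a * S (R * E ^ b) :=
    ((hD.pow hk a).mul_left (by positivity) _)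
  have h3 : S (D ^ a * R * E ^ b) ≤ ((C ^ 4)⁻¹) ^ 2 * S R := by
    have hassoc : D ^ a * R * E ^ b = D ^ a * (R * E ^ b) := by rw [mul_assoc]
    rw [hassoc]
    calc S (D ^ a * (R * E ^ b)) ≤ ((C ^ 2)⁻¹) ^ a * S (R * E ^ b) := h2
      _ ≤ ((C ^ 2)⁻¹) ^ a * (((C ^ 2)⁻¹) ^ b * S R) := by
          have := h1; nlinarith [pow_nonneg hk a]
      _ = ((C ^ 2)⁻¹) ^ (a + b) * S R := by rw [pow_add]; ring
      _ = ((C ^ 4)⁻¹) ^ 2 * S R := by rw [hab]; norm_num [← inv_pow, ← pow_mul]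
  rw [frobNorm_eq, frobNorm_eq]
  calc Real.sqrt (S (D ^ a * R * E ^ b)) ≤ Real.sqrt (((C ^ 4)⁻¹) ^ 2 * S R) :=
        Real.sqrt_le_sqrt h3
    _ = (C ^ 4)⁻¹ * Real.sqrt (S R) := by
        rw [Real.sqrt_mul (sq_nonneg _), Real.sqrt_sq (by positivity)]

attribute [local instance] Matrix.frobeniusNormedAddCommGroup

lemma frobNorm_eq_norm (X : Matrix (Fin d) (Fin d) ℝ) : frobNorm X = ‖X‖ := by
  rw [frobNorm_eq, S_eq, Matrix.frobenius_norm_def]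
  rw [Finset.sum_comm]
  rw [Real.sqrt_eq_rpow]
  congr 1
  refine Finset.sum_congr rfl fun i _ => Finset.sum_congr rfl fun j _ => ?_
  rw [Real.rpow_two, Real.norm_eq_abs, sq_abs]

end InvCubeAux

attribute [local instance] Matrix.frobeniusNormedAddCommGroup

open InvCubeAux in
theorem inverse_cube_lipschitz_bound (d : ℕ) (C : ℝ) (hC : 0 < C)
    (P Q : Matrix (Fin d) (Fin d) ℝ) (hP : P.PosDef) (hQ : Q.PosDef)
    (hPev : ∀ i : Fin d, C ≤ hP.1.eigenvalues i)
    (hQev : ∀ i : Fin d, C ≤ hQ.1.eigenvalues i) :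
    frobNorm ((P⁻¹) ^ 3 - (Q⁻¹) ^ 3) ≤ 3 * Real.sqrt d / C ^ 4 * frobNorm (P - Q) := by
  classical
  rcases Nat.eq_zero_or_pos d with hd | hd
  · subst hd
    simp [frobNorm, Matrix.trace]
  -- d ≥ 1
  have hsd : (1:ℝ) ≤ Real.sqrt d := by
    rw [show (1:ℝ) = Real.sqrt 1 by simp]
    exact Real.sqrt_le_sqrt (by exact_mod_cast hd)
  have hPdet : IsUnit P.det := isUnit_iff_ne_zero.mpr hP.det_pos.ne'
  have hQdet : IsUnit Q.det := isUnit_iff_ne_zero.mpr hQ.det_pos.ne'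
  set D := P⁻¹ with hDdef
  set E := Q⁻¹ with hEdef
  have hDP : D * P = 1 := Matrix.nonsing_inv_mul _ hPdet
  have hQE : Q * E = 1 := Matrix.mul_nonsing_inv _ hQdet
  have hD : OpSqBnd D ((C ^ 2)⁻¹) := inv_opSqBnd hC hP hPev
  have hE : OpSqBnd E ((C ^ 2)⁻¹) := inv_opSqBnd hC hQ hQev
  have hEsym : Eᵀ = E := by
    rw [hEdef, Matrix.transpose_nonsing_inv]
    congr 1
    have := hQ.1
    rw [Matrix.IsHermitian] at this
    simpa [Matrix.conjTranspose_eq_transpose_of_trivial] using this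
  -- algebraic identity
  have f1 : D ^ 3 * Q * E = D ^ 3 := by rw [mul_assoc, hQE, mul_one]
  have f2 : D ^ 3 * P * E = D ^ 2 * E := by
    rw [pow_succ, mul_assoc (D ^ 2) D P, hDP, mul_one]
  have f3 : D ^ 2 * Q * E ^ 2 = D ^ 2 * E := by
    rw [mul_assoc, show Q * E ^ 2 = E by rw [sq, ← mul_assoc, hQE, one_mul]]
  have f4 : D ^ 2 * P * E ^ 2 = D * E ^ 2 := by
    rw [show D ^ 2 = D * D from sq D, mul_assoc D D P, hDP, mul_one]
  have f5 : D * Q * E ^ 3 = D * E ^ 2 := by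
    rw [mul_assoc, show Q * E ^ 3 = E ^ 2 by
      rw [pow_succ', ← mul_assoc, hQE, one_mul]]
  have f6 : D * P * E ^ 3 = E ^ 3 := by rw [hDP, one_mul]
  have e1 : D ^ 3 * (Q - P) * E = D ^ 3 - D ^ 2 * E := by
    rw [Matrix.mul_sub, Matrix.sub_mul, f1, f2]
  have e2 : D ^ 2 * (Q - P) * E ^ 2 = D ^ 2 * E - D * E ^ 2 := by
    rw [Matrix.mul_sub, Matrix.sub_mul, f3, f4]
  have e3 : D * (Q - P) * E ^ 3 = D * E ^ 2 - E ^ 3 := by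
    rw [Matrix.mul_sub, Matrix.sub_mul, f5, f6]
  have hid : D ^ 3 - E ^ 3
      = D ^ 3 * (Q - P) * E + (D ^ 2 * (Q - P) * E ^ 2 + D * (Q - P) * E ^ 3) := by
    rw [e1, e2, e3]; abel
  -- bounds on the three terms
  have hb1 : frobNorm (D ^ 3 * (Q - P) * E ^ 1) ≤ (C ^ 4)⁻¹ * frobNorm (Q - P) :=
    term_bound hC hD hE hEsym 3 1 rfl
  have hb2 : frobNorm (D ^ 2 * (Q - P) * E ^ 2) ≤ (C ^ 4)⁻¹ * frobNorm (Q - P) :=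
    term_bound hC hD hE hEsym 2 2 rfl
  have hb3 : frobNorm (D ^ 1 * (Q - P) * E ^ 3) ≤ (C ^ 4)⁻¹ * frobNorm (Q - P) :=
    term_bound hC hD hE hEsym 1 3 rfl
  rw [pow_one] at hb1 hb3
  -- triangle inequality via the frobenius norm instance
  have htri : frobNorm (D ^ 3 - E ^ 3)
      ≤ frobNorm (D ^ 3 * (Q - P) * E) + frobNorm (D ^ 2 * (Q - P) * E ^ 2)
        + frobNorm (D * (Q - P) * E ^ 3) := by
    rw [hid]
    simp only [frobNorm_eq_norm]
    calc ‖D ^ 3 * (Q - P) * E + (D ^ 2 * (Q - P) * E ^ 2 + D * (Q - P) * E ^ 3)‖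
        ≤ ‖D ^ 3 * (Q - P) * E‖ + ‖D ^ 2 * (Q - P) * E ^ 2 + D * (Q - P) * E ^ 3‖ :=
          norm_add_le _ _
      _ ≤ ‖D ^ 3 * (Q - P) * E‖ + (‖D ^ 2 * (Q - P) * E ^ 2‖ + ‖D * (Q - P) * E ^ 3‖) := by
          have := norm_add_le (D ^ 2 * (Q - P) * E ^ 2) (D * (Q - P) * E ^ 3)
          linarith
      _ = _ := by ring
  have hQP : frobNorm (Q - P) = frobNorm (P - Q) := by
    rw [frobNorm_eq_norm, frobNorm_eq_norm, ← neg_sub P Q, norm_neg]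
  have hmain : frobNorm (D ^ 3 - E ^ 3) ≤ 3 * (C ^ 4)⁻¹ * frobNorm (P - Q) := by
    calc frobNorm (D ^ 3 - E ^ 3) ≤ _ := htri
      _ ≤ (C ^ 4)⁻¹ * frobNorm (Q - P) + (C ^ 4)⁻¹ * frobNorm (Q - P)
          + (C ^ 4)⁻¹ * frobNorm (Q - P) := by linarith
      _ = 3 * (C ^ 4)⁻¹ * frobNorm (Q - P) := by ring
      _ = 3 * (C ^ 4)⁻¹ * frobNorm (P - Q) := by rw [hQP]
  have hfn : 0 ≤ frobNorm (P - Q) := Real.sqrt_nonneg _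
  have hfinal : 3 * (C ^ 4)⁻¹ * frobNorm (P - Q) ≤ 3 * Real.sqrt d / C ^ 4 * frobNorm (P - Q) := by
    apply mul_le_mul_of_nonneg_right _ hfn
    rw [div_eq_mul_inv]
    have hc4 : (0:ℝ) < (C ^ 4)⁻¹ := by positivity
    nlinarith [hsd, hc4]
  exact le_trans hmain hfinal
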